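/- Suppose all eigenvalues of P = D⁻¹A other than the Perron eigenvalue 1 are strictly negative. Then any equilibrium x* of ẋ = D⁻¹A s(x) − x with s non-decreasing is fully synchronized, i.e., all components of x* are equal. -/

import Mathlib

open Matrix

theorem stmt7 {N : ℕ} (G : SimpleGraph (Fin N)) [DecidableRel G.Adj]
    (hconn : G.Connected)
    (a : Fin N → Fin N → ℝ) (haG : ∀ i j, a i j = if G.Adj i j then 1 else 0)
    (d : Fin N → ℝ) (hd : ∀ i, d i = ∑ j, a i j) (hdpos : ∀ i, 0 < d i)
    (hspec : ∀ (μ : ℝ) (v : Fin N → ℝ), v ≠ 0 →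
      (∀ i, (1 / d i) * ∑ j, a i j * v j = μ * v i) → μ = 1 ∨ μ < 0)
    (s : ℝ → ℝ) (hs : MonotoneOn s (Set.Icc (-1) 1))
    (hmaps : Set.MapsTo s (Set.Icc (-1) 1) (Set.Icc (-1) 1))
    (x : Fin N → ℝ) (hx : ∀ j, x j ∈ Set.Icc (-1 : ℝ) 1)
    (heq : ∀ i, x i = (1 / d i) * ∑ j, a i j * s (x j)) :
    ∀ i j, x i = x j := by
  set w : Fin N → ℝ := fun i => s (x i) with hw
  have ha_symm : ∀ i j, a i j = a j i := by
    intro i j; simp [haG, G.adj_comm]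
  have ha_nonneg : ∀ i j, 0 ≤ a i j := by
    intro i j; rw [haG]; positivity
  have hdne : ∀ i, d i ≠ 0 := fun i => (hdpos i).ne'
  have hsq : ∀ i, Real.sqrt (d i) * Real.sqrt (d i) = d i := fun i =>
    Real.mul_self_sqrt (hdpos i).le
  have hsqpos : ∀ i, 0 < Real.sqrt (d i) := fun i => Real.sqrt_pos.mpr (hdpos i)
  have heq' : ∀ i, d i * x i = ∑ j, a i j * w j := by
    intro i
    rw [heq i]
    rw [← mul_assoc, mul_one_div, div_self (hdne i), one_mul]
  -- the symmetric matrix M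
  set M : Matrix (Fin N) (Fin N) ℝ :=
    Matrix.of (fun i j => a i j / (Real.sqrt (d i) * Real.sqrt (d j))) with hMdef
  have hMsymm : ∀ i j, M i j = M j i := by
    intro i j
    show a i j / (Real.sqrt (d i) * Real.sqrt (d j)) = a j i / (Real.sqrt (d j) * Real.sqrt (d i))
    rw [ha_symm i j, mul_comm]
  have hM : M.IsHermitian := by
    ext i j
    simpa [Matrix.conjTranspose_apply] using (hMsymm j i)
  set z : EuclideanSpace ℝ (Fin N) := WithLp.toLp 2 (fun i => Real.sqrt (d i) * w i) with hz
  set y : EuclideanSpace ℝ (Fin N) := WithLp.toLp 2 (M *ᵥ z) with hy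
  have hMz : ∀ i, y i = Real.sqrt (d i) * x i := by
    intro i
    have hterm : ∀ j, M i j * z j = a i j * w j / Real.sqrt (d i) := by
      intro j
      show a i j / (Real.sqrt (d i) * Real.sqrt (d j)) * (Real.sqrt (d j) * w j) = _
      rw [div_mul_eq_mul_div,
        div_eq_div_iff (mul_pos (hsqpos i) (hsqpos j)).ne' (hsqpos i).ne']
      ring
    calc y i = ∑ j, M i j * z j := rfl
    _ = ∑ j, a i j * w j / Real.sqrt (d i) := by simp_rw [hterm]
    _ = (∑ j, a i j * w j) / Real.sqrt (d i) := by rw [Finset.sum_div]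
    _ = (d i * x i) / Real.sqrt (d i) := by rw [heq' i]
    _ = Real.sqrt (d i) * x i := by
        rw [div_eq_iff (hsqpos i).ne']; linear_combination x i * (hsq i).symm
  -- key inequality
  have I1 : ∑ i, d i * (x i * x i) ≤ ∑ i, d i * (x i * w i) := by
    have key0 : 0 ≤ ∑ i, ∑ j, a i j * ((x i - x j) * (w i - w j)) := by
      refine Finset.sum_nonneg fun i _ => Finset.sum_nonneg fun j _ => ?_
      refine mul_nonneg (ha_nonneg i j) ?_
      rcases le_total (x i) (x j) with h | h
      · have hm := hs (hx i) (hx j) h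
        have : w i - w j ≤ 0 := by simpa [hw] using sub_nonpos.mpr hm
        nlinarith
      · have hm := hs (hx j) (hx i) h
        have : 0 ≤ w i - w j := by simpa [hw] using sub_nonneg.mpr hm
        nlinarith
    have hT1 : ∀ (f : Fin N → ℝ), ∑ i, ∑ j, a i j * f i = ∑ i, d i * f i := by
      intro f
      refine Finset.sum_congr rfl fun i _ => ?_
      rw [← Finset.sum_mul, ← hd]
    have hT2 : ∀ (f : Fin N → ℝ), ∑ i, ∑ j, a i j * f j = ∑ j, d j * f j := by
      intro f
      rw [Finset.sum_comm]
      refine Finset.sum_congr rfl fun j _ => ?_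
      rw [← Finset.sum_mul]
      congr 1
      rw [hd j]
      exact Finset.sum_congr rfl fun i _ => ha_symm i j
    have hT3 : ∑ i, ∑ j, a i j * (x i * w j) = ∑ i, d i * (x i * x i) := by
      refine Finset.sum_congr rfl fun i _ => ?_
      have h1 : ∑ j, a i j * (x i * w j) = x i * ∑ j, a i j * w j := by
        rw [Finset.mul_sum]
        exact Finset.sum_congr rfl fun j _ => by ring
      rw [h1, ← heq' i]
      ring
    have hT4 : ∑ i, ∑ j, a i j * (x j * w i) = ∑ i, d i * (x i * x i) := by
      rw [Finset.sum_comm]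
      refine Finset.sum_congr rfl fun j _ => ?_
      have h1 : ∑ i, a i j * (x j * w i) = x j * ∑ i, a j i * w i := by
        rw [Finset.mul_sum]
        exact Finset.sum_congr rfl fun i _ => by rw [ha_symm i j]; ring
      rw [h1, ← heq' j]
      ring
    have expand : ∑ i, ∑ j, a i j * ((x i - x j) * (w i - w j))
        = (∑ i, d i * (x i * w i)) - (∑ i, d i * (x i * x i))
          - (∑ i, d i * (x i * x i)) + (∑ i, d i * (x i * w i)) := by
      have e : ∀ i j : Fin N, a i j * ((x i - x j) * (w i - w j))
          = a i j * (x i * w i) - a i j * (x i * w j) - a i j * (x j * w i)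
            + a i j * (x j * w j) := fun i j => by ring
      simp_rw [e]
      simp only [Finset.sum_add_distrib, Finset.sum_sub_distrib]
      rw [hT1 (fun i => x i * w i), hT2 (fun j => x j * w j), hT3, hT4]
    rw [expand] at key0
    linarith
  -- spectral step: M z = z
  have hfix : y = z := by
    set b := hM.eigenvectorBasis with hbdef
    set μ := hM.eigenvalues with hmudef
    -- each eigenvalue is 1 or negative
    have hμ : ∀ k, μ k = 1 ∨ μ k < 0 := by
      intro k
      have hbke : M *ᵥ ⇑(b k) = μ k • ⇑(b k) := hM.mulVec_eigenvectorBasis k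
      have hbne : (b k) ≠ 0 := b.orthonormal.ne_zero k
      set v : Fin N → ℝ := fun i => b k i / Real.sqrt (d i) with hvdef
      have hvne : v ≠ 0 := by
        intro h0
        apply hbne
        ext i
        have h1 : v i = 0 := congrFun h0 i
        have h2 : b k i = 0 := by
          rcases div_eq_zero_iff.mp h1 with h | h
          · exact h
          · exact absurd h (hsqpos i).ne'
        simpa using h2
      refine hspec (μ k) v hvne ?_
      intro i
      have hcol : ∑ j, a i j * v j = Real.sqrt (d i) * (M *ᵥ ⇑(b k)) i := by
        have hterm : ∀ j, Real.sqrt (d i) * (M i j * b k j) = a i j * v j := by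
          intro j
          show Real.sqrt (d i) * (a i j / (Real.sqrt (d i) * Real.sqrt (d j)) * b k j)
              = a i j * (b k j / Real.sqrt (d j))
          rw [div_mul_eq_mul_div, mul_div_assoc', mul_div_assoc',
            div_eq_div_iff (mul_pos (hsqpos i) (hsqpos j)).ne' (hsqpos j).ne']
          ring
        calc ∑ j, a i j * v j = ∑ j, Real.sqrt (d i) * (M i j * b k j) := by
              exact (Finset.sum_congr rfl fun j _ => hterm j).symm
        _ = Real.sqrt (d i) * ∑ j, M i j * b k j := by rw [Finset.mul_sum]
        _ = Real.sqrt (d i) * (M *ᵥ ⇑(b k)) i := rfl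
      rw [hcol, hbke]
      show 1 / d i * (Real.sqrt (d i) * (μ k * b k i)) = μ k * (b k i / Real.sqrt (d i))
      rw [div_mul_eq_mul_div, one_mul, mul_div_assoc',
        div_eq_div_iff (hdne i) (hsqpos i).ne']
      linear_combination μ k * b k i * (hsq i)
    -- Parseval
    have parseval : ∀ u v : EuclideanSpace ℝ (Fin N),
        ∑ k, (inner ℝ (b k) u : ℝ) * (inner ℝ (b k) v : ℝ) = (inner ℝ u v : ℝ) := by
      intro u v
      rw [← b.sum_inner_mul_inner u v]
      exact Finset.sum_congr rfl fun k _ => by rw [real_inner_comm (b k) u]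
    set c : Fin N → ℝ := fun k => (inner ℝ (b k) z : ℝ) with hcdef
    -- coefficients of y = M z
    have hMcoef : ∀ k, (inner ℝ (b k) y : ℝ) = μ k * c k := by
      intro k
      have h1 : (inner ℝ (b k) y : ℝ) = ∑ i, b k i * ∑ j, M i j * z j := by
        simp [hy, PiLp.inner_apply, RCLike.inner_apply, Matrix.mulVec, dotProduct]
        exact Finset.sum_congr rfl fun i _ => mul_comm _ _
      have h2 : ∑ i, b k i * ∑ j, M i j * z j = ∑ j, (∑ i, M j i * b k i) * z j := by
        simp_rw [Finset.mul_sum]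
        rw [Finset.sum_comm]
        refine Finset.sum_congr rfl fun j _ => ?_
        rw [Finset.sum_mul]
        refine Finset.sum_congr rfl fun i _ => ?_
        rw [hMsymm i j]
        ring
      have h3 : ∀ j, (∑ i, M j i * b k i) = μ k * b k j := by
        intro j
        have h4 := congrFun (hM.mulVec_eigenvectorBasis k) j
        simpa [Matrix.mulVec, dotProduct] using h4
      rw [h1, h2]
      simp_rw [h3]
      rw [hcdef]
      simp only [PiLp.inner_apply, RCLike.inner_apply, starRingEnd_apply, star_trivial,
        Finset.mul_sum]
      exact Finset.sum_congr rfl fun j _ => by ring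
    have hS1 : (inner ℝ z y : ℝ) = ∑ i, d i * (x i * w i) := by
      simp only [PiLp.inner_apply, RCLike.inner_apply, starRingEnd_apply, star_trivial]
      refine Finset.sum_congr rfl fun i _ => ?_
      rw [hMz i]
      show Real.sqrt (d i) * x i * (Real.sqrt (d i) * w i) = d i * (x i * w i)
      linear_combination x i * w i * (hsq i)
    have hS2 : (inner ℝ y y : ℝ) = ∑ i, d i * (x i * x i) := by
      simp only [PiLp.inner_apply, RCLike.inner_apply, starRingEnd_apply, star_trivial]
      refine Finset.sum_congr rfl fun i _ => ?_
      rw [hMz i]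
      linear_combination x i * x i * (hsq i)
    have hP1 : ∑ k, c k * (μ k * c k) = ∑ i, d i * (x i * w i) := by
      rw [← hS1, ← parseval z y]
      exact Finset.sum_congr rfl fun k _ => by rw [hMcoef k]
    have hP2 : ∑ k, (μ k * c k) * (μ k * c k) = ∑ i, d i * (x i * x i) := by
      rw [← hS2, ← parseval y y]
      exact Finset.sum_congr rfl fun k _ => by rw [hMcoef k]
    -- termwise vanishing
    have hsum0 : ∑ k, ((μ k * c k) * (μ k * c k) - c k * (μ k * c k)) ≤ 0 := by
      rw [Finset.sum_sub_distrib, hP1, hP2]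
      linarith
    have hterm : ∀ k ∈ Finset.univ, 0 ≤ (μ k * c k) * (μ k * c k) - c k * (μ k * c k) := by
      intro k _
      rcases hμ k with h | h
      · rw [h]; ring_nf; exact le_refl 0
      · nlinarith [sq_nonneg (c k), mul_nonneg (mul_pos (neg_pos.mpr h)
          (show (0:ℝ) < 1 - μ k by linarith)).le (mul_self_nonneg (c k))]
    have hzero : ∀ k, (μ k * c k) * (μ k * c k) - c k * (μ k * c k) = 0 := by
      intro k
      have hle : ∑ k, ((μ k * c k) * (μ k * c k) - c k * (μ k * c k)) = 0 :=
        le_antisymm hsum0 (Finset.sum_nonneg hterm)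
      exact (Finset.sum_eq_zero_iff_of_nonneg hterm).mp hle k (Finset.mem_univ k)
    have hck : ∀ k, μ k * c k = c k := by
      intro k
      rcases hμ k with h | h
      · rw [h, one_mul]
      · have h0 := hzero k
        have hpos : 0 < μ k * (μ k - 1) := by nlinarith
        have hsq0 : c k * c k = 0 := by
          have h1 : μ k * (μ k - 1) * (c k * c k) = 0 := by linear_combination h0
          rcases mul_eq_zero.mp h1 with h' | h'
          · exact absurd h' hpos.ne'
          · exact h'
        have hc0 : c k = 0 := mul_self_eq_zero.mp hsq0
        rw [hc0, mul_zero]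
    -- conclude y = z
    have hdiff : ∀ k, (inner ℝ (b k) (y - z) : ℝ) = 0 := by
      intro k
      rw [inner_sub_right, hMcoef k, hck k]
      simp [hcdef]
    have hself : (inner ℝ (y - z) (y - z) : ℝ) = 0 := by
      rw [← parseval]
      exact Finset.sum_eq_zero fun k _ => by rw [hdiff k, mul_zero]
    have h5 := inner_self_eq_zero.mp hself
    exact sub_eq_zero.mp h5
  -- hence x = w
  have hxw : ∀ i, x i = w i := by
    intro i
    have h1 : Real.sqrt (d i) * x i = Real.sqrt (d i) * w i := by
      rw [← hMz i, hfix]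
    exact mul_left_cancel₀ (hsqpos i).ne' h1
  have heqx : ∀ i, d i * x i = ∑ j, a i j * x j := by
    intro i; rw [heq' i]; exact Finset.sum_congr rfl fun j _ => by rw [hxw j]
  -- max principle
  intro i j
  obtain ⟨i0, -, hmax⟩ := Finset.exists_max_image Finset.univ x ⟨i, Finset.mem_univ i⟩
  have hmax' : ∀ k, x k ≤ x i0 := fun k => hmax k (Finset.mem_univ k)
  have step : ∀ u, x u = x i0 → ∀ v, G.Adj u v → x v = x i0 := by
    intro u hu v huv
    have h0 : ∑ j, a u j * (x i0 - x j) = 0 := by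
      have h1 : ∑ j, a u j * (x i0 - x j) = (∑ j, a u j) * x i0 - ∑ j, a u j * x j := by
        simp_rw [mul_sub]
        rw [Finset.sum_sub_distrib, ← Finset.sum_mul]
      rw [h1, ← hd u, ← heqx u, hu]
      ring
    have hterm : ∀ j ∈ Finset.univ, 0 ≤ a u j * (x i0 - x j) := fun j _ =>
      mul_nonneg (ha_nonneg u j) (by linarith [hmax' j])
    have h2 := (Finset.sum_eq_zero_iff_of_nonneg hterm).mp h0 v (Finset.mem_univ v)
    have hav : a u v = 1 := by rw [haG]; simp [huv]
    rw [hav, one_mul] at h2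
    linarith
  have key : ∀ (u v : Fin N) (p : G.Walk u v), x u = x i0 → x v = x i0 := by
    intro u v p
    induction p with
    | nil => exact id
    | cons h p ih => exact fun hu => ih (step _ hu _ h)
  have hreach : ∀ v, x v = x i0 := fun v => key i0 v (hconn i0 v).some rfl
  rw [hreach i, hreach j]
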